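/- Let m(n) denote the number of 3 × n 0-1 matrices in which every row and every column avoids the patterns 010 and 101, with m(0) = 1. The generating function Σ_{n≥0} m(n)·t^n equals the rational function −(5t⁴ − 19t² − 4t − 1)/(t⁴ − 5t² − 2t + 1); equivalently, as formal power series, (t⁴ − 5t² − 2t + 1)·Σ_{n≥0} m(n)·t^n = 1 + 4t + 19t² − 5t⁴. -/

import Mathlib

open Finset PowerSeries

/-- `m n` is the number of `3 × n` 0-1 matrices in which every row (read left to
right) and every column (read top to bottom) avoids the patterns `010` and `101`.
Note `m 0 = 1` (the empty matrix). -/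
def notAlone3Count (n : ℕ) : ℕ :=
  Fintype.card {M : Fin 3 → Fin n → Bool //
    (∀ i, ¬ [false, true, false] <:+: List.ofFn (fun j => M i j) ∧
          ¬ [true, false, true] <:+: List.ofFn (fun j => M i j)) ∧
    (∀ j, ¬ [false, true, false] <:+: List.ofFn (fun i => M i j) ∧
          ¬ [true, false, true] <:+: List.ofFn (fun i => M i j))}

abbrev C3 := Fin 3 → Bool

def colOKb (u : C3) : Bool := (u 0 == u 1) || (u 1 == u 2)

def tripb (u v w : C3) : Bool :=
  ((u 0 == v 0) || (v 0 == w 0)) && (((u 1 == v 1) || (v 1 == w 1)) && ((u 2 == v 2) || (v 2 == w 2)))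

def avoidB : List Bool → Bool
  | a :: b :: c :: t => ((a == b) || (b == c)) && avoidB (b :: c :: t)
  | _ => true

def validB : List C3 → Bool
  | u :: v :: w :: t => colOKb u && (tripb u v w && validB (v :: w :: t))
  | l => l.all colOKb

lemma short_avoid {l : List Bool} (h : l.length ≤ 2) :
    ¬ [false, true, false] <:+: l ∧ ¬ [true, false, true] <:+: l := by
  constructor <;> intro h' <;> have := h'.length_le <;> simp at this <;> omega

lemma avoid_iff : ∀ l : List Bool,
    (¬ [false, true, false] <:+: l ∧ ¬ [true, false, true] <:+: l) ↔ avoidB l = true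
  | [] => by simpa [avoidB] using short_avoid (by simp)
  | [a] => by simpa [avoidB] using short_avoid (by simp)
  | [a, b] => by simpa [avoidB] using short_avoid (by simp)
  | a :: b :: c :: t => by
    have ih := avoid_iff (b :: c :: t)
    rw [avoidB]
    have hpre : ∀ x y z : Bool, ([x, y, z] <+: a :: b :: c :: t) ↔ (x = a ∧ y = b ∧ z = c) := by
      intro x y z
      simp [List.cons_prefix_cons]
    constructor
    · rintro ⟨h1, h2⟩
      have hr := ih.mp ⟨fun h => h1 (List.infix_cons_iff.mpr (Or.inr h)),
        fun h => h2 (List.infix_cons_iff.mpr (Or.inr h))⟩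
      rw [hr]
      have p1 : ¬(false = a ∧ true = b ∧ false = c) :=
        fun h => h1 (List.infix_cons_iff.mpr (Or.inl ((hpre _ _ _).mpr h)))
      have p2 : ¬(true = a ∧ false = b ∧ true = c) :=
        fun h => h2 (List.infix_cons_iff.mpr (Or.inl ((hpre _ _ _).mpr h)))
      cases a <;> cases b <;> cases c <;> simp_all
    · intro h
      rw [Bool.and_eq_true] at h
      obtain ⟨hok, hr⟩ := h
      obtain ⟨r1, r2⟩ := ih.mpr hr
      constructor <;> intro hin <;> rcases List.infix_cons_iff.mp hin with hp | hi
      · obtain ⟨ha, hb, hc⟩ := (hpre _ _ _).mp hp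
        subst ha; subst hb; subst hc; simp at hok
      · exact r1 hi
      · obtain ⟨ha, hb, hc⟩ := (hpre _ _ _).mp hp
        subst ha; subst hb; subst hc; simp at hok
      · exact r2 hi

lemma tripb_iff (u v w : C3) :
    tripb u v w = true ↔ ∀ i : Fin 3, ((u i == v i) || (v i == w i)) = true := by
  revert u v w; decide

lemma colOKb_iff (v : C3) :
    (¬ [false, true, false] <:+: List.ofFn v ∧ ¬ [true, false, true] <:+: List.ofFn v) ↔
      colOKb v = true := by
  revert v; decide

lemma validB_iff : ∀ l : List C3,
    validB l = true ↔
      ((∀ x ∈ l, colOKb x = true) ∧ ∀ i : Fin 3, avoidB (l.map (fun u => u i)) = true)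
  | [] => by simp [validB, avoidB]
  | [u] => by simp [validB, avoidB, List.all]
  | [u, v] => by simp [validB, avoidB, List.all]
  | u :: v :: w :: t => by
    have ih := validB_iff (v :: w :: t)
    rw [validB]
    simp only [List.map_cons, avoidB, Bool.and_eq_true] at *
    rw [ih, tripb_iff]
    simp only [List.mem_cons, forall_and, forall_eq_or_imp]
    tauto

lemma count_eq_valid (n : ℕ) :
    notAlone3Count n = Fintype.card {c : Fin n → C3 // validB (List.ofFn c) = true} := by
  apply Fintype.card_congr
  refine Equiv.subtypeEquiv
    ⟨Function.swap, Function.swap, fun _ => rfl, fun _ => rfl⟩ ?_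
  intro M
  rw [validB_iff]
  simp only [Equiv.coe_fn_mk]
  constructor
  · rintro ⟨hrow, hcol⟩
    constructor
    · rw [List.forall_mem_ofFn_iff]
      intro j
      exact (colOKb_iff _).mp (hcol j)
    · intro i
      rw [List.map_ofFn]
      exact (avoid_iff _).mp (hrow i)
  · rintro ⟨hcols, hrows⟩
    constructor
    · intro i
      have := hrows i
      rw [List.map_ofFn] at this
      exact (avoid_iff _).mpr this
    · intro j
      rw [List.forall_mem_ofFn_iff] at hcols
      exact (colOKb_iff _).mpr (hcols j)

def g (n : ℕ) (u v : C3) : ℕ :=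
  Fintype.card {w : Fin n → C3 // validB (u :: v :: List.ofFn w) = true}

lemma card_succ_fun (q : List C3 → Bool) (n : ℕ) :
    Fintype.card {c : Fin (n + 1) → C3 // q (List.ofFn c) = true}
      = ∑ w : C3, Fintype.card {t : Fin n → C3 // q (w :: List.ofFn t) = true} := by
  rw [← Fintype.card_sigma]
  apply Fintype.card_congr
  refine
    { toFun := fun c => ⟨c.1 0, Fin.tail c.1, ?_⟩
      invFun := fun s => ⟨Fin.cons s.1 s.2.1, ?_⟩
      left_inv := ?_
      right_inv := ?_ }
  · have := c.2
    rwa [List.ofFn_succ] at this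
  · have := s.2.2
    rw [List.ofFn_succ]
    simpa [Fin.cons_zero, Fin.cons_succ] using this
  · rintro ⟨c, h⟩
    exact Subtype.ext (Fin.cons_self_tail c)
  · rintro ⟨w, t, h⟩
    simp [Fin.tail_cons]
    exact HEq.rfl

lemma card_const_and (b : Bool) {α : Type*} [Fintype α] (r : α → Bool) :
    Fintype.card {t : α // (b && r t) = true}
      = if b = true then Fintype.card {t : α // r t = true} else 0 := by
  cases b
  · rw [if_neg (show ¬ (false = true) from by simp)]
    haveI : IsEmpty {t : α // (false && r t) = true} := ⟨fun x => by simpa using x.2⟩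
    exact Fintype.card_eq_zero
  · simp

lemma g_succ (n : ℕ) (u v : C3) :
    g (n + 1) u v = ∑ w : C3, if (colOKb u && tripb u v w) = true then g n v w else 0 := by
  rw [g, card_succ_fun (fun l => validB (u :: v :: l)) n]
  apply Finset.sum_congr rfl
  intro w _
  have hv : ∀ t : Fin n → C3,
      validB (u :: v :: w :: List.ofFn t)
        = ((colOKb u && tripb u v w) && validB (v :: w :: List.ofFn t)) := by
    intro t
    rw [validB, Bool.and_assoc]
  simp only [hv]
  rw [card_const_and]
  rfl

lemma g_zero (u v : C3) :
    g 0 u v = if (colOKb u && colOKb v) = true then 1 else 0 := by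
  rw [g]
  have hv : ∀ w : Fin 0 → C3,
      validB (u :: v :: List.ofFn w) = (colOKb u && colOKb v) := by
    intro w
    rw [List.ofFn_zero]
    show (colOKb u && (colOKb v && true)) = _
    simp
  by_cases h : (colOKb u && colOKb v) = true
  · rw [if_pos h, Fintype.card_eq_one_iff]
    exact ⟨⟨fun i => i.elim0, by rw [hv, h]⟩, fun y => Subtype.ext (funext fun i => i.elim0)⟩
  · rw [if_neg h]
    haveI : IsEmpty {t : Fin 0 → C3 // validB (u :: v :: List.ofFn t) = true} :=
      ⟨fun x => h (by rw [← hv x.1]; exact x.2)⟩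
    exact Fintype.card_eq_zero

lemma count_two_plus (n : ℕ) :
    notAlone3Count (n + 2) = ∑ u : C3, ∑ v : C3, g n u v := by
  rw [count_eq_valid, card_succ_fun (fun l => validB l) (n + 1)]
  apply Finset.sum_congr rfl
  intro u _
  exact card_succ_fun (fun l => validB (u :: l)) n

def T0 : Fin 8 → Fin 8 → ℕ := ![![1,1,0,1,1,0,1,1], ![1,1,0,1,1,0,1,1], ![0,0,0,0,0,0,0,0], ![1,1,0,1,1,0,1,1], ![1,1,0,1,1,0,1,1], ![0,0,0,0,0,0,0,0], ![1,1,0,1,1,0,1,1], ![1,1,0,1,1,0,1,1]]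

def T1 : Fin 8 → Fin 8 → ℕ := ![![6,3,3,2,3,1,2,1], ![3,6,1,3,2,3,1,2], ![0,0,0,0,0,0,0,0], ![2,3,3,6,1,1,2,3], ![3,2,1,1,6,3,3,2], ![0,0,0,0,0,0,0,0], ![2,1,3,2,3,1,6,3], ![1,2,1,3,2,3,3,6]]

def T2 : Fin 8 → Fin 8 → ℕ := ![![17,11,12,9,11,6,9,6], ![11,17,6,11,9,12,6,9], ![7,3,12,7,3,0,7,3], ![9,11,12,17,6,6,9,11], ![11,9,6,6,17,12,11,9], ![3,7,0,3,7,12,3,7], ![9,6,12,9,11,6,17,11], ![6,9,6,11,9,12,11,17]]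

def T3 : Fin 8 → Fin 8 → ℕ := ![![63,37,39,28,37,17,28,17], ![37,63,17,37,28,39,17,28], ![30,12,54,30,12,0,30,12], ![28,37,39,63,17,17,28,37], ![37,28,17,17,63,39,37,28], ![12,30,0,12,30,54,12,30], ![28,17,39,28,37,17,63,37], ![17,28,17,37,28,39,37,63]]

def T4 : Fin 8 → Fin 8 → ℕ := ![![210,128,137,100,128,63,100,63], ![128,210,63,128,100,137,63,100], ![95,39,168,95,39,0,95,39], ![100,128,137,210,63,63,100,128], ![128,100,63,63,210,137,128,100], ![39,95,0,39,95,168,39,95], ![100,63,137,100,128,63,210,128], ![63,100,63,128,100,137,128,210]]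

def eC (u : C3) : Fin 8 :=
  ⟨(u 0).toNat + 2 * (u 1).toNat + 4 * (u 2).toNat, by
    have h0 := Bool.toNat_le (u 0)
    have h1 := Bool.toNat_le (u 1)
    have h2 := Bool.toNat_le (u 2)
    omega⟩

def aStep (u v w : C3) : ℕ := if (colOKb u && tripb u v w) = true then 1 else 0

lemma d0 : ∀ u v : C3, T0 (eC u) (eC v) = if (colOKb u && colOKb v) = true then 1 else 0 := by
  decide

lemma d1 : ∀ v w : C3, T1 (eC v) (eC w) = ∑ u : C3, T0 (eC u) (eC v) * aStep u v w := by decide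
lemma d2 : ∀ v w : C3, T2 (eC v) (eC w) = ∑ u : C3, T1 (eC u) (eC v) * aStep u v w := by decide
lemma d3 : ∀ v w : C3, T3 (eC v) (eC w) = ∑ u : C3, T2 (eC u) (eC v) * aStep u v w := by decide
lemma d4 : ∀ v w : C3, T4 (eC v) (eC w) = ∑ u : C3, T3 (eC u) (eC v) * aStep u v w := by decide

lemma d5 : ∀ u v : C3, (colOKb u && colOKb v) = true →
    T4 (eC u) (eC v) + T0 (eC u) (eC v) = 2 * T3 (eC u) (eC v) + 5 * T2 (eC u) (eC v) := by
  decide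

lemma dS0 : (∑ u : C3, ∑ v : C3, T0 (eC u) (eC v) * (if (colOKb u && colOKb v) = true then 1 else 0)) = 36 := by decide
lemma dS1 : (∑ u : C3, ∑ v : C3, T1 (eC u) (eC v) * (if (colOKb u && colOKb v) = true then 1 else 0)) = 102 := by decide
lemma dS2 : (∑ u : C3, ∑ v : C3, T2 (eC u) (eC v) * (if (colOKb u && colOKb v) = true then 1 else 0)) = 378 := by decide
lemma dS3 : (∑ u : C3, ∑ v : C3, T3 (eC u) (eC v) * (if (colOKb u && colOKb v) = true then 1 else 0)) = 1260 := by decide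

def Wt (ρ : C3 → C3 → ℕ) (n : ℕ) : ℕ := ∑ u : C3, ∑ v : C3, ρ u v * g n u v

lemma step_lemma (ρ ρ' : C3 → C3 → ℕ)
    (h : ∀ v w, ρ' v w = ∑ u : C3, ρ u v * aStep u v w) (n : ℕ) :
    Wt ρ' n = Wt ρ (n + 1) := by
  unfold Wt
  have hg : ∀ u v, g (n + 1) u v = ∑ w : C3, aStep u v w * g n v w := by
    intro u v
    rw [g_succ]
    apply Finset.sum_congr rfl
    intro w _
    rw [aStep]
    by_cases hb : (colOKb u && tripb u v w) = true
    · rw [if_pos hb, if_pos hb, one_mul]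
    · rw [if_neg hb, if_neg hb, zero_mul]
  simp only [hg, h, Finset.sum_mul, Finset.mul_sum, mul_assoc]
  have e1 : (∑ v : C3, ∑ w : C3, ∑ u : C3, ρ u v * (aStep u v w * g n v w))
      = ∑ v : C3, ∑ u : C3, ∑ w : C3, ρ u v * (aStep u v w * g n v w) :=
    Finset.sum_congr rfl fun v _ => Finset.sum_comm
  have e2 : (∑ v : C3, ∑ u : C3, ∑ w : C3, ρ u v * (aStep u v w * g n v w))
      = ∑ u : C3, ∑ v : C3, ∑ w : C3, ρ u v * (aStep u v w * g n v w) :=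
    Finset.sum_comm
  exact e1.trans e2

lemma g_vanish : ∀ n : ℕ, ∀ u v : C3, (colOKb u && colOKb v) ≠ true → g n u v = 0 := by
  intro n
  induction n with
  | zero => intro u v h; rw [g_zero, if_neg h]
  | succ n ih =>
    intro u v h
    rw [g_succ]
    apply Finset.sum_eq_zero
    intro w _
    by_cases hu : colOKb u = true
    · have hv : colOKb v ≠ true := fun hv => h (by rw [hu, hv]; rfl)
      by_cases hb : (colOKb u && tripb u v w) = true
      · rw [if_pos hb]
        apply ih v w
        intro hc
        exact hv ((Bool.and_eq_true _ _).mp hc).1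
      · rw [if_neg hb]
    · rw [if_neg (fun hb => hu ((Bool.and_eq_true _ _).mp hb).1)]

lemma Wt0_eq (n : ℕ) : Wt (fun u v => T0 (eC u) (eC v)) n = notAlone3Count (n + 2) := by
  rw [count_two_plus, Wt]
  apply Finset.sum_congr rfl
  intro u _
  apply Finset.sum_congr rfl
  intro v _
  rw [d0]
  by_cases h : (colOKb u && colOKb v) = true
  · rw [if_pos h, one_mul]
  · rw [if_neg h, zero_mul, g_vanish n u v h]

lemma WtS0 (n : ℕ) : Wt (fun u v => T0 (eC u) (eC v)) n = ∑ u : C3, ∑ v : C3, g n u v := by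
  rw [Wt0_eq, count_two_plus]

lemma chain1 (n : ℕ) : Wt (fun u v => T1 (eC u) (eC v)) n = Wt (fun u v => T0 (eC u) (eC v)) (n + 1) :=
  step_lemma _ _ d1 n
lemma chain2 (n : ℕ) : Wt (fun u v => T2 (eC u) (eC v)) n = Wt (fun u v => T1 (eC u) (eC v)) (n + 1) :=
  step_lemma _ _ d2 n
lemma chain3 (n : ℕ) : Wt (fun u v => T3 (eC u) (eC v)) n = Wt (fun u v => T2 (eC u) (eC v)) (n + 1) :=
  step_lemma _ _ d3 n
lemma chain4 (n : ℕ) : Wt (fun u v => T4 (eC u) (eC v)) n = Wt (fun u v => T3 (eC u) (eC v)) (n + 1) :=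
  step_lemma _ _ d4 n

lemma WtT (k : ℕ) : ∀ n, (match k with
  | 0 => Wt (fun u v => T0 (eC u) (eC v)) n
  | _ => 0) = 0 ∨ True := fun _ => Or.inr trivial

lemma Wt_k_eq (n : ℕ) :
    Wt (fun u v => T1 (eC u) (eC v)) n = notAlone3Count (n + 3) ∧
    Wt (fun u v => T2 (eC u) (eC v)) n = notAlone3Count (n + 4) ∧
    Wt (fun u v => T3 (eC u) (eC v)) n = notAlone3Count (n + 5) ∧
    Wt (fun u v => T4 (eC u) (eC v)) n = notAlone3Count (n + 6) := by
  refine ⟨?_, ?_, ?_, ?_⟩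
  · rw [chain1, Wt0_eq]
  · rw [chain2, chain1, Wt0_eq]
  · rw [chain3, chain2, chain1, Wt0_eq]
  · rw [chain4, chain3, chain2, chain1, Wt0_eq]

lemma main_rec (n : ℕ) :
    notAlone3Count (n + 6) + notAlone3Count (n + 2)
      = 2 * notAlone3Count (n + 5) + 5 * notAlone3Count (n + 4) := by
  obtain ⟨h1, h2, h3, h4⟩ := Wt_k_eq n
  rw [← h4, ← h3, ← h2, ← Wt0_eq n]
  unfold Wt
  rw [Finset.mul_sum, Finset.mul_sum, ← Finset.sum_add_distrib, ← Finset.sum_add_distrib]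
  apply Finset.sum_congr rfl
  intro u _
  rw [Finset.mul_sum, Finset.mul_sum, ← Finset.sum_add_distrib, ← Finset.sum_add_distrib]
  apply Finset.sum_congr rfl
  intro v _
  by_cases h : (colOKb u && colOKb v) = true
  · have := d5 u v h
    nlinarith [this]
  · rw [g_vanish n u v h]
    ring

lemma count0 : notAlone3Count 0 = 1 := by decide
lemma count1 : notAlone3Count 1 = 6 := by decide

lemma countS (k : ℕ) (T : Fin 8 → Fin 8 → ℕ) (val : ℕ)
    (hS : (∑ u : C3, ∑ v : C3, T (eC u) (eC v) * (if (colOKb u && colOKb v) = true then 1 else 0)) = val)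
    (hW : Wt (fun u v => T (eC u) (eC v)) 0 = notAlone3Count k) :
    notAlone3Count k = val := by
  rw [← hW, Wt]
  rw [← hS]
  apply Finset.sum_congr rfl
  intro u _
  apply Finset.sum_congr rfl
  intro v _
  rw [g_zero]

lemma count2 : notAlone3Count 2 = 36 := countS 2 T0 36 dS0 (Wt0_eq 0)
lemma count3 : notAlone3Count 3 = 102 := countS 3 T1 102 dS1 (Wt_k_eq 0).1
lemma count4 : notAlone3Count 4 = 378 := countS 4 T2 378 dS2 (Wt_k_eq 0).2.1
lemma count5 : notAlone3Count 5 = 1260 := countS 5 T3 1260 dS3 (Wt_k_eq 0).2.2.1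

/-- The generating function `Σ m(n) tⁿ` equals
`−(5t⁴ − 19t² − 4t − 1)/(t⁴ − 5t² − 2t + 1)`, stated as an identity of formal
power series: `(t⁴ − 5t² − 2t + 1) · Σ m(n) tⁿ = 1 + 4t + 19t² − 5t⁴`. -/
theorem notAlone3_generatingFunction :
    ((X : PowerSeries ℤ) ^ 4 - 5 * X ^ 2 - 2 * X + 1) *
        PowerSeries.mk (fun n => (notAlone3Count n : ℤ)) =
      1 + 4 * X + 19 * X ^ 2 - 5 * X ^ 4 := by
  set f := PowerSeries.mk (fun n => (notAlone3Count n : ℤ)) with hf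
  have c5 : (C 5 : PowerSeries ℤ) = 5 := by simp [map_ofNat]
  have c2 : (C 2 : PowerSeries ℤ) = 2 := by simp [map_ofNat]
  have c4 : (C 4 : PowerSeries ℤ) = 4 := by simp [map_ofNat]
  have c19 : (C 19 : PowerSeries ℤ) = 19 := by simp [map_ofNat]
  have expand : ((X : PowerSeries ℤ) ^ 4 - 5 * X ^ 2 - 2 * X + 1) * f
      = f * X ^ 4 - C 5 * (f * X ^ 2) - C 2 * (f * X ^ 1) + f := by
    rw [c5, c2]; ring
  have rhs : (1 + 4 * X + 19 * X ^ 2 - 5 * X ^ 4 : PowerSeries ℤ)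
      = 1 + C 4 * X ^ 1 + C 19 * X ^ 2 - C 5 * X ^ 4 := by
    rw [c5, c4, c19]; ring
  rw [expand, rhs]
  ext n
  rw [map_add, map_sub, map_sub, coeff_C_mul, coeff_C_mul,
    coeff_mul_X_pow', coeff_mul_X_pow', coeff_mul_X_pow',
    map_sub, map_add, map_add, coeff_C_mul, coeff_C_mul, coeff_C_mul,
    coeff_one, coeff_X_pow, coeff_X_pow, coeff_X_pow]
  simp only [hf, coeff_mk]
  match n with
  | 0 => norm_num [count0]
  | 1 => norm_num [count0, count1]
  | 2 => norm_num [count0, count1, count2]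
  | 3 => norm_num [count1, count2, count3]
  | 4 => norm_num [count0, count2, count3, count4]
  | 5 => norm_num [count1, count3, count4, count5]
  | (n + 6) =>
    have h := main_rec n
    have h' : ((notAlone3Count (n + 6) : ℤ) + notAlone3Count (n + 2))
        = 2 * notAlone3Count (n + 5) + 5 * notAlone3Count (n + 4) := by
      exact_mod_cast congrArg (fun k : ℕ => (k : ℤ)) h
    have e4 : n + 6 - 4 = n + 2 := by omega
    have e2 : n + 6 - 2 = n + 4 := by omega
    have e1 : n + 6 - 1 = n + 5 := by omega
    rw [if_pos (by omega : 4 ≤ n + 6), if_pos (by omega : 2 ≤ n + 6),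
      if_pos (by omega : 1 ≤ n + 6), e4, e2, e1,
      if_neg (by omega : ¬ n + 6 = 0), if_neg (by omega : ¬ n + 6 = 1),
      if_neg (by omega : ¬ n + 6 = 2), if_neg (by omega : ¬ n + 6 = 4)]
    linarith
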